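/- arXiv:2103.09088 — 3 statements merged into one kernel-verified Lean document; each statement's English description precedes it below -/
import Mathlib

section
/- For n×n real symmetric matrices A and B with s(A+B) = s(A) + s(B), every unit eigenvector u of A+B corresponding to λ_max(A+B) satisfies Au = λ_max(A)·u and Bu = λ_max(B)·u (i.e., u is a common eigenvector of A and B for their maximal eigenvalues). -/
open Matrix
open scoped RealInnerProductSpace

/-- Largest eigenvalue of a real symmetric (Hermitian) matrix; junk value 0 otherwise. -/
noncomputable def maxEig {m : Type*} [Fintype m] [DecidableEq m] (A : Matrix m m ℝ) : ℝ :=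
  if hA : A.IsHermitian then ⨆ i, hA.eigenvalues i else 0

/-- Smallest eigenvalue of a real symmetric (Hermitian) matrix; junk value 0 otherwise. -/
noncomputable def minEig {m : Type*} [Fintype m] [DecidableEq m] (A : Matrix m m ℝ) : ℝ :=
  if hA : A.IsHermitian then ⨅ i, hA.eigenvalues i else 0

/-- The spread of a matrix: difference of largest and smallest eigenvalues. -/
noncomputable def spread {m : Type*} [Fintype m] [DecidableEq m] (A : Matrix m m ℝ) : ℝ :=
  maxEig A - minEig A

/-- `S_n[a,b]`: real symmetric `n×n` matrices with all entries in `[a,b]`. -/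
def Snab (n : ℕ) (a b : ℝ) : Set (Matrix (Fin n) (Fin n) ℝ) :=
  {A | A.IsHermitian ∧ ∀ i j, A i j ∈ Set.Icc a b}

variable {n : ℕ} {A : Matrix (Fin n) (Fin n) ℝ}

private lemma inner_eq_dot (x y : EuclideanSpace ℝ (Fin n)) :
    ⟪x, y⟫ = x ⬝ᵥ y := by
  simp [PiLp.inner_apply, RCLike.inner_apply, dotProduct, mul_comm]

private lemma repr_mulVec (hA : A.IsHermitian) (x : Fin n → ℝ) (i : Fin n) :
    hA.eigenvectorBasis.repr (WithLp.toLp 2 (A.mulVec x)) i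
      = hA.eigenvalues i * hA.eigenvectorBasis.repr (WithLp.toLp 2 x) i := by
  rw [OrthonormalBasis.repr_apply_apply, OrthonormalBasis.repr_apply_apply,
    inner_eq_dot, inner_eq_dot, WithLp.ofLp_toLp, WithLp.ofLp_toLp, dotProduct_mulVec]
  have hAt : Aᵀ = A := by
    ext i j
    have := congrFun (congrFun hA.eq i) j
    simpa [conjTranspose] using this
  have hsym : (hA.eigenvectorBasis i).ofLp ᵥ* A
      = A *ᵥ (hA.eigenvectorBasis i).ofLp := by
    rw [← Matrix.mulVec_transpose, hAt]
  rw [hsym.trans (hA.mulVec_eigenvectorBasis i), smul_dotProduct]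
  rfl

private lemma dot_repr (hA : A.IsHermitian) (x y : Fin n → ℝ) :
    x ⬝ᵥ y = ∑ i, hA.eigenvectorBasis.repr (WithLp.toLp 2 x) i
      * hA.eigenvectorBasis.repr (WithLp.toLp 2 y) i := by
  have hxy := inner_eq_dot (WithLp.toLp 2 x) (WithLp.toLp 2 y)
  rw [WithLp.ofLp_toLp, WithLp.ofLp_toLp] at hxy
  rw [← hxy, ← hA.eigenvectorBasis.repr.inner_map_map (WithLp.toLp 2 x) (WithLp.toLp 2 y), inner_eq_dot]
  rfl

private lemma quad_repr (hA : A.IsHermitian) (x : Fin n → ℝ) :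
    x ⬝ᵥ A.mulVec x = ∑ i, hA.eigenvalues i * hA.eigenvectorBasis.repr (WithLp.toLp 2 x) i ^ 2 := by
  rw [dot_repr hA x (A.mulVec x)]
  exact Finset.sum_congr rfl fun i _ => by rw [repr_mulVec hA x i]; ring

private lemma maxEig_eq (hA : A.IsHermitian) : maxEig A = ⨆ i, hA.eigenvalues i := dif_pos hA
private lemma minEig_eq (hA : A.IsHermitian) : minEig A = ⨅ i, hA.eigenvalues i := dif_pos hA

private lemma eig_le_max [Nonempty (Fin n)] (hA : A.IsHermitian) (i : Fin n) :
    hA.eigenvalues i ≤ maxEig A := by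
  rw [maxEig_eq hA]; exact le_ciSup (Set.Finite.bddAbove (Set.finite_range _)) i

private lemma min_le_eig [Nonempty (Fin n)] (hA : A.IsHermitian) (i : Fin n) :
    minEig A ≤ hA.eigenvalues i := by
  rw [minEig_eq hA]; exact ciInf_le (Set.Finite.bddBelow (Set.finite_range _)) i

private lemma quad_le_max [Nonempty (Fin n)] (hA : A.IsHermitian) (x : Fin n → ℝ) :
    x ⬝ᵥ A.mulVec x ≤ maxEig A * (x ⬝ᵥ x) := by
  rw [quad_repr hA x, dot_repr hA x x, Finset.mul_sum]
  refine Finset.sum_le_sum fun i _ => ?_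
  have := eig_le_max hA i
  nlinarith [sq_nonneg (hA.eigenvectorBasis.repr (WithLp.toLp 2 x) i), sq_abs (hA.eigenvectorBasis.repr (WithLp.toLp 2 x) i)]

private lemma min_le_quad [Nonempty (Fin n)] (hA : A.IsHermitian) (x : Fin n → ℝ) :
    minEig A * (x ⬝ᵥ x) ≤ x ⬝ᵥ A.mulVec x := by
  rw [quad_repr hA x, dot_repr hA x x, Finset.mul_sum]
  refine Finset.sum_le_sum fun i _ => ?_
  have := min_le_eig hA i
  nlinarith [sq_nonneg (hA.eigenvectorBasis.repr (WithLp.toLp 2 x) i)]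

private lemma eig_of_quad_eq [Nonempty (Fin n)] (hA : A.IsHermitian) (x : Fin n → ℝ)
    (hx : x ⬝ᵥ x = 1) (hq : x ⬝ᵥ A.mulVec x = maxEig A) :
    A.mulVec x = maxEig A • x := by
  set b := hA.eigenvectorBasis with hb
  have hzero : ∑ i, (maxEig A - hA.eigenvalues i) * b.repr (WithLp.toLp 2 x) i ^ 2 = 0 := by
    have h1 : ∑ i, b.repr (WithLp.toLp 2 x) i ^ 2 = 1 := by
      have := dot_repr hA x x
      rw [hx] at this
      rw [← this.symm]
      exact Finset.sum_congr rfl fun i _ => (sq (b.repr (WithLp.toLp 2 x) i)).symm ▸ rfl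
    have h2 := quad_repr hA x
    rw [hq] at h2
    have : ∑ i, (maxEig A - hA.eigenvalues i) * b.repr (WithLp.toLp 2 x) i ^ 2
        = maxEig A * ∑ i, b.repr (WithLp.toLp 2 x) i ^ 2 - ∑ i, hA.eigenvalues i * b.repr (WithLp.toLp 2 x) i ^ 2 := by
      rw [Finset.mul_sum, ← Finset.sum_sub_distrib]
      exact Finset.sum_congr rfl fun i _ => by ring
    rw [this, h1, ← h2]
    ring
  have hterm : ∀ i ∈ Finset.univ, (maxEig A - hA.eigenvalues i) * b.repr (WithLp.toLp 2 x) i ^ 2 = 0 := by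
    rw [← Finset.sum_eq_zero_iff_of_nonneg]
    · exact hzero
    · intro i _
      have h1 := eig_le_max hA i
      have h2 := sq_nonneg (b.repr (WithLp.toLp 2 x) i)
      nlinarith
  have hkey : ∀ i, hA.eigenvalues i * b.repr (WithLp.toLp 2 x) i = maxEig A * b.repr (WithLp.toLp 2 x) i := by
    intro i
    have := hterm i (Finset.mem_univ i)
    rcases mul_eq_zero.mp this with h | h
    · rw [show hA.eigenvalues i = maxEig A by linarith]
    · rw [pow_eq_zero_iff (by norm_num)] at h
      rw [h, mul_zero, mul_zero]
  have : b.repr (WithLp.toLp 2 (A.mulVec x)) = b.repr (WithLp.toLp 2 (maxEig A • x)) := by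
    ext i
    rw [repr_mulVec hA x i, hkey i]
    have h3 : WithLp.toLp 2 (maxEig A • x)
        = maxEig A • WithLp.toLp 2 x := rfl
    rw [h3, LinearIsometryEquiv.map_smul]
    rfl
  exact congrArg WithLp.ofLp (b.repr.injective this)

private lemma unit_eigvec [Nonempty (Fin n)] (hA : A.IsHermitian) (i : Fin n) :
    ((hA.eigenvectorBasis i).ofLp ⬝ᵥ (hA.eigenvectorBasis i).ofLp) = 1 := by
  rw [← inner_eq_dot]
  rw [real_inner_self_eq_norm_sq, hA.eigenvectorBasis.orthonormal.1 i]
  norm_num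

private lemma maxEig_add_le [Nonempty (Fin n)] {B : Matrix (Fin n) (Fin n) ℝ}
    (hA : A.IsHermitian) (hB : B.IsHermitian) :
    maxEig (A + B) ≤ maxEig A + maxEig B := by
  have hAB : (A + B).IsHermitian := hA.add hB
  obtain ⟨i, hi⟩ := exists_eq_ciSup_of_finite (f := hAB.eigenvalues)
  set v : Fin n → ℝ := (hAB.eigenvectorBasis i).ofLp with hv
  have hq : v ⬝ᵥ (A + B).mulVec v = maxEig (A + B) := by
    have hmv : (A + B) *ᵥ v = hAB.eigenvalues i • v := hAB.mulVec_eigenvectorBasis i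
    have hds : v ⬝ᵥ (hAB.eigenvalues i • v) = hAB.eigenvalues i * (v ⬝ᵥ v) := dotProduct_smul _ _ _
    rw [hmv, hds, unit_eigvec hAB i, mul_one, maxEig_eq hAB, ← hi]
  have hsplit : v ⬝ᵥ (A + B).mulVec v = v ⬝ᵥ A.mulVec v + v ⬝ᵥ B.mulVec v := by
    rw [Matrix.add_mulVec, dotProduct_add]
  have h1 := quad_le_max hA v
  have h2 := quad_le_max hB v
  rw [unit_eigvec hAB i, mul_one] at h1 h2
  linarith [hq.symm.trans hsplit]

private lemma le_minEig_add [Nonempty (Fin n)] {B : Matrix (Fin n) (Fin n) ℝ}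
    (hA : A.IsHermitian) (hB : B.IsHermitian) :
    minEig A + minEig B ≤ minEig (A + B) := by
  have hAB : (A + B).IsHermitian := hA.add hB
  obtain ⟨i, hi⟩ := exists_eq_ciInf_of_finite (f := hAB.eigenvalues)
  set v : Fin n → ℝ := (hAB.eigenvectorBasis i).ofLp with hv
  have hq : v ⬝ᵥ (A + B).mulVec v = minEig (A + B) := by
    have hmv : (A + B) *ᵥ v = hAB.eigenvalues i • v := hAB.mulVec_eigenvectorBasis i
    have hds : v ⬝ᵥ (hAB.eigenvalues i • v) = hAB.eigenvalues i * (v ⬝ᵥ v) := dotProduct_smul _ _ _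
    rw [hmv, hds, unit_eigvec hAB i, mul_one, minEig_eq hAB, ← hi]
  have hsplit : v ⬝ᵥ (A + B).mulVec v = v ⬝ᵥ A.mulVec v + v ⬝ᵥ B.mulVec v := by
    rw [Matrix.add_mulVec, dotProduct_add]
  have h1 := min_le_quad hA v
  have h2 := min_le_quad hB v
  rw [unit_eigvec hAB i, mul_one] at h1 h2
  linarith [hq.symm.trans hsplit]

/-- if spreads add, every top unit eigenvector of A+B is a common
top eigenvector of A and B. -/
theorem common_eigenvector_of_spread_add {n : ℕ} (A B : Matrix (Fin n) (Fin n) ℝ)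
    (hA : A.IsHermitian) (hB : B.IsHermitian)
    (h : spread (A + B) = spread A + spread B) :
    ∀ u : Fin n → ℝ, ∑ i, u i ^ 2 = 1 →
      (A + B).mulVec u = maxEig (A + B) • u →
      A.mulVec u = maxEig A • u ∧ B.mulVec u = maxEig B • u := by
  intro u hu hmu
  have hn : 0 < n := by
    by_contra hc
    push_neg at hc
    interval_cases n
    simp at hu
  haveI : Nonempty (Fin n) := ⟨⟨0, hn⟩⟩
  have hAB : (A + B).IsHermitian := hA.add hB
  have hdot : u ⬝ᵥ u = 1 := by
    rw [← hu]; exact Finset.sum_congr rfl fun i _ => (sq (u i)).symm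
  -- spreads force maximal eigenvalue additivity
  have hmaxle := maxEig_add_le hA hB
  have hminle := le_minEig_add hA hB
  have hmax : maxEig (A + B) = maxEig A + maxEig B := by
    unfold spread at h; linarith
  -- quadratic form of u
  have hq : u ⬝ᵥ (A + B).mulVec u = maxEig (A + B) := by
    rw [hmu, dotProduct_smul, hdot]; simp
  have hsplit : u ⬝ᵥ (A + B).mulVec u = u ⬝ᵥ A.mulVec u + u ⬝ᵥ B.mulVec u := by
    rw [Matrix.add_mulVec, dotProduct_add]
  have h1 := quad_le_max hA u
  have h2 := quad_le_max hB u
  rw [hdot, mul_one] at h1 h2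
  have hqA : u ⬝ᵥ A.mulVec u = maxEig A := by linarith [hq.symm.trans hsplit]
  have hqB : u ⬝ᵥ B.mulVec u = maxEig B := by linarith [hq.symm.trans hsplit]
  exact ⟨eig_of_quad_eq hA u hdot hqA, eig_of_quad_eq hB u hdot hqB⟩
end

section
/- Let a < b be reals and let S_n[a,b] denote the set of n×n real symmetric matrices all of whose entries lie in [a,b]. Then for every n ≥ 1, max{s(A) : A ∈ S_n[a,b]} < max{s(A) : A ∈ S_{n+1}[a,b]}, i.e., the maximal spread strictly increases with dimension. -/
open Matrix

open scoped InnerProductSpace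
set_option linter.unusedSectionVars false

section Rayleigh
variable {m : Type*} [Fintype m] [DecidableEq m] {A : Matrix m m ℝ}

lemma dot_expand (hA : A.IsHermitian) (v w : m → ℝ) :
    v ⬝ᵥ w = ∑ i, (v ⬝ᵥ ⇑(hA.eigenvectorBasis i)) * (⇑(hA.eigenvectorBasis i) ⬝ᵥ w) := by
  have := (hA.eigenvectorBasis.sum_inner_mul_inner
    ((WithLp.equiv 2 _).symm v) ((WithLp.equiv 2 _).symm w)).symm
  simpa [PiLp.inner_apply, RCLike.inner_apply, dotProduct, mul_comm] using this

omit [Fintype m] [DecidableEq m] in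
lemma transpose_eq (hA : A.IsHermitian) : Aᵀ = A := by
  ext i j; simpa using hA.apply i j

lemma dot_eig (hA : A.IsHermitian) (x : m → ℝ) (i : m) :
    ⇑(hA.eigenvectorBasis i) ⬝ᵥ (A *ᵥ x) = hA.eigenvalues i * (⇑(hA.eigenvectorBasis i) ⬝ᵥ x) := by
  rw [Matrix.dotProduct_mulVec, ← Matrix.mulVec_transpose, transpose_eq hA,
    hA.mulVec_eigenvectorBasis, smul_dotProduct]
  rfl

lemma quad_eq_sum (hA : A.IsHermitian) (x : m → ℝ) :
    x ⬝ᵥ A *ᵥ x = ∑ i, hA.eigenvalues i * (x ⬝ᵥ ⇑(hA.eigenvectorBasis i)) ^ 2 := by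
  rw [dot_expand hA x (A *ᵥ x)]
  refine Finset.sum_congr rfl fun i _ => ?_
  rw [dot_eig hA x i, dotProduct_comm]
  ring

lemma sumsq_eq (hA : A.IsHermitian) (x : m → ℝ) :
    ∑ i, x i ^ 2 = ∑ i, (x ⬝ᵥ ⇑(hA.eigenvectorBasis i)) ^ 2 := by
  have h1 : ∑ i, x i ^ 2 = x ⬝ᵥ x := by simp [dotProduct, sq]
  rw [h1, dot_expand hA x x]
  refine Finset.sum_congr rfl fun i _ => ?_
  rw [dotProduct_comm ⇑(hA.eigenvectorBasis i) x, sq]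

variable [Nonempty m]

lemma eig_le_maxEig (hA : A.IsHermitian) (i : m) : hA.eigenvalues i ≤ maxEig A := by
  rw [maxEig, dif_pos hA]
  exact le_ciSup (Set.Finite.bddAbove (Set.finite_range _)) i

lemma minEig_le_eig (hA : A.IsHermitian) (i : m) : minEig A ≤ hA.eigenvalues i := by
  rw [minEig, dif_pos hA]
  exact ciInf_le (Set.Finite.bddBelow (Set.finite_range _)) i

lemma quad_le (hA : A.IsHermitian) (x : m → ℝ) :
    x ⬝ᵥ A *ᵥ x ≤ maxEig A * ∑ i, x i ^ 2 := by
  rw [quad_eq_sum hA, sumsq_eq hA, Finset.mul_sum]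
  exact Finset.sum_le_sum fun i _ =>
    mul_le_mul_of_nonneg_right (eig_le_maxEig hA i) (sq_nonneg _)

lemma le_quad (hA : A.IsHermitian) (x : m → ℝ) :
    minEig A * ∑ i, x i ^ 2 ≤ x ⬝ᵥ A *ᵥ x := by
  rw [quad_eq_sum hA, sumsq_eq hA, Finset.mul_sum]
  exact Finset.sum_le_sum fun i _ =>
    mul_le_mul_of_nonneg_right (minEig_le_eig hA i) (sq_nonneg _)

lemma unit_basis (hA : A.IsHermitian) (i : m) :
    ∑ k, (⇑(hA.eigenvectorBasis i) k) ^ 2 = 1 := by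
  have h := hA.eigenvectorBasis.orthonormal.1 i
  have h2 : (⟪hA.eigenvectorBasis i, hA.eigenvectorBasis i⟫_ℝ) = 1 := by
    rw [real_inner_self_eq_norm_sq, h]; norm_num
  rw [PiLp.inner_apply] at h2
  simpa [RCLike.inner_apply, sq] using h2

lemma quad_basis (hA : A.IsHermitian) (i : m) :
    ⇑(hA.eigenvectorBasis i) ⬝ᵥ A *ᵥ ⇑(hA.eigenvectorBasis i) = hA.eigenvalues i := by
  rw [dot_eig hA _ i]
  have h : ⇑(hA.eigenvectorBasis i) ⬝ᵥ ⇑(hA.eigenvectorBasis i) = 1 := by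
    have := unit_basis hA i
    simpa [dotProduct, sq] using this
  rw [h, mul_one]

lemma exists_max_unit (hA : A.IsHermitian) :
    ∃ v : m → ℝ, (∑ i, v i ^ 2 = 1) ∧ v ⬝ᵥ A *ᵥ v = maxEig A := by
  obtain ⟨j, hj⟩ := Finite.exists_max hA.eigenvalues
  refine ⟨⇑(hA.eigenvectorBasis j), unit_basis hA j, ?_⟩
  rw [quad_basis hA j, maxEig, dif_pos hA]
  exact le_antisymm (le_ciSup (Set.Finite.bddAbove (Set.finite_range _)) j) (ciSup_le hj)

lemma exists_min_unit (hA : A.IsHermitian) :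
    ∃ v : m → ℝ, (∑ i, v i ^ 2 = 1) ∧ v ⬝ᵥ A *ᵥ v = minEig A := by
  obtain ⟨j, hj⟩ := Finite.exists_min hA.eigenvalues
  refine ⟨⇑(hA.eigenvectorBasis j), unit_basis hA j, ?_⟩
  rw [quad_basis hA j, minEig, dif_pos hA]
  exact le_antisymm (le_ciInf hj) (ciInf_le (Set.Finite.bddBelow (Set.finite_range _)) j)

lemma spread_ge (hA : A.IsHermitian) {x y : m → ℝ} (hx : ∑ i, x i ^ 2 = 1)
    (hy : ∑ i, y i ^ 2 = 1) : x ⬝ᵥ A *ᵥ x - y ⬝ᵥ A *ᵥ y ≤ spread A := by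
  have h1 := quad_le hA x
  have h2 := le_quad hA y
  rw [hx, mul_one] at h1
  rw [hy, mul_one] at h2
  unfold spread; linarith

lemma spread_eq (hA : A.IsHermitian) :
    ∃ x y : m → ℝ, (∑ i, x i ^ 2 = 1) ∧ (∑ i, y i ^ 2 = 1) ∧
      spread A = x ⬝ᵥ A *ᵥ x - y ⬝ᵥ A *ᵥ y := by
  obtain ⟨x, hx, hx2⟩ := exists_max_unit hA
  obtain ⟨y, hy, hy2⟩ := exists_min_unit hA
  exact ⟨x, y, hx, hy, by rw [hx2, hy2]; rfl⟩

end Rayleigh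

section Compact

def unitSet (n : ℕ) : Set (Fin n → ℝ) := {x | ∑ i, x i ^ 2 = 1}

lemma isCompact_unitSet (n : ℕ) : IsCompact (unitSet n) := by
  have h1 : unitSet n ⊆ Set.pi Set.univ fun _ : Fin n => Set.Icc (-1 : ℝ) 1 := by
    intro x hx
    intro i _
    have h2 : x i ^ 2 ≤ 1 := by
      have h3 : ∑ j, x j ^ 2 = 1 := hx
      calc x i ^ 2 ≤ ∑ j, x j ^ 2 :=
            Finset.single_le_sum (fun j _ => sq_nonneg (x j)) (Finset.mem_univ i)
        _ = 1 := h3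
    constructor <;> nlinarith
  have h2 : IsClosed (unitSet n) := by
    have h : unitSet n = (fun x : Fin n → ℝ => ∑ i, x i ^ 2) ⁻¹' {1} := rfl
    rw [h]
    exact IsClosed.preimage (by fun_prop) isClosed_singleton
  exact ((isCompact_univ_pi fun _ => isCompact_Icc)).of_isClosed_subset h2 h1

lemma unitSet_nonempty (n : ℕ) (hn : 1 ≤ n) : (unitSet n).Nonempty := by
  have : NeZero n := ⟨by omega⟩
  refine ⟨fun i => if i = ⟨0, by omega⟩ then 1 else 0, ?_⟩
  simp only [unitSet, Set.mem_setOf_eq, ite_pow, one_pow, ne_eq, OfNat.ofNat_ne_zero,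
    not_false_eq_true, zero_pow]
  rw [Finset.sum_eq_single_of_mem ⟨0, by omega⟩ (Finset.mem_univ _)]
  · exact if_pos rfl
  · intro b _ hb
    exact if_neg hb

lemma isCompact_Snab (n : ℕ) (a b : ℝ) : IsCompact (Snab n a b) := by
  have h1 : Snab n a b ⊆ Set.pi Set.univ fun _ : Fin n =>
      Set.pi Set.univ fun _ : Fin n => Set.Icc a b := by
    intro A hA i _
    intro j _
    exact hA.2 i j
  have h2 : IsClosed (Snab n a b) := by
    have h : Snab n a b = {A : Matrix (Fin n) (Fin n) ℝ | A.IsHermitian} ∩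
        Set.pi Set.univ fun _ : Fin n => Set.pi Set.univ fun _ : Fin n => Set.Icc a b := by
      ext A
      simp only [Snab, Set.mem_setOf_eq, Set.mem_inter_iff, Set.mem_pi, Set.mem_univ,
        forall_true_left]
      exact ⟨fun h => ⟨h.1, fun i _ j _ => h.2 i j⟩,
        fun h => ⟨h.1, fun i j => h.2 i (Set.mem_univ _) j (Set.mem_univ _)⟩⟩
    rw [h]
    refine IsClosed.inter ?_ (isClosed_set_pi fun i _ => isClosed_set_pi fun j _ => isClosed_Icc)
    have h' : {A : Matrix (Fin n) (Fin n) ℝ | A.IsHermitian} =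
        ⋂ i, ⋂ j, {A : Matrix (Fin n) (Fin n) ℝ | A j i = A i j} := by
      ext A
      simp only [Set.mem_setOf_eq, Set.mem_iInter]
      constructor
      · intro h i j; simpa using h.apply i j
      · intro h
        ext i j
        simp [Matrix.conjTranspose_apply, h j i]
    rw [h']
    exact isClosed_iInter fun i => isClosed_iInter fun j =>
      isClosed_eq (by fun_prop) (by fun_prop)
  exact ((isCompact_univ_pi fun _ => isCompact_univ_pi fun _ => isCompact_Icc)).of_isClosed_subset
    h2 h1

lemma Snab_nonempty (n : ℕ) {a b : ℝ} (hab : a ≤ b) : (Snab n a b).Nonempty :=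
  ⟨fun _ _ => a, by ext i j; exact star_trivial a, fun i j => ⟨le_refl a, hab⟩⟩

lemma exists_greatest (n : ℕ) (hn : 1 ≤ n) {a b : ℝ} (hab : a ≤ b) :
    ∃ A₀ ∈ Snab n a b, IsGreatest (spread '' Snab n a b) (spread A₀) := by
  have hne : Nonempty (Fin n) := ⟨⟨0, by omega⟩⟩
  set f : Matrix (Fin n) (Fin n) ℝ × ((Fin n → ℝ) × (Fin n → ℝ)) → ℝ :=
    fun p => p.2.1 ⬝ᵥ p.1 *ᵥ p.2.1 - p.2.2 ⬝ᵥ p.1 *ᵥ p.2.2 with hfdef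
  have hf : Continuous f := by
    have hq : ∀ g : Matrix (Fin n) (Fin n) ℝ × ((Fin n → ℝ) × (Fin n → ℝ)) → (Fin n → ℝ),
        Continuous g → Continuous (fun p => g p ⬝ᵥ p.1 *ᵥ g p) := by
      intro g hg
      simp only [dotProduct, Matrix.mulVec]
      fun_prop
    exact (hq _ (continuous_fst.comp continuous_snd)).sub
      (hq _ (continuous_snd.comp continuous_snd))
  have hPc : IsCompact ((Snab n a b) ×ˢ ((unitSet n) ×ˢ (unitSet n))) :=
    (isCompact_Snab n a b).prod ((isCompact_unitSet n).prod (isCompact_unitSet n))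
  have hPne : ((Snab n a b) ×ˢ ((unitSet n) ×ˢ (unitSet n))).Nonempty :=
    (Snab_nonempty n hab).prod ((unitSet_nonempty n hn).prod (unitSet_nonempty n hn))
  obtain ⟨⟨A₀, x₀, y₀⟩, hp, hmax⟩ := hPc.exists_isMaxOn hPne hf.continuousOn
  obtain ⟨hA₀, hx₀, hy₀⟩ := hp
  refine ⟨A₀, hA₀, ⟨A₀, hA₀, rfl⟩, ?_⟩
  rintro s ⟨A, hA, rfl⟩
  obtain ⟨x, y, hx, hy, hsp⟩ := spread_eq hA.1
  have h1 : f (A, x, y) ≤ f (A₀, x₀, y₀) := hmax (Set.mk_mem_prod hA ⟨hx, hy⟩)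
  have h2 : f (A₀, x₀, y₀) ≤ spread A₀ := spread_ge hA₀.1 hx₀ hy₀
  rw [hsp]
  exact le_trans h1 h2

end Compact

section Dup

def dupIdx {n : ℕ} (i : Fin n) : Fin (n + 1) → Fin n :=
  fun p => Fin.lastCases i (fun j => j) p

def dupM {n : ℕ} (A : Matrix (Fin n) (Fin n) ℝ) (i : Fin n) :
    Matrix (Fin (n + 1)) (Fin (n + 1)) ℝ :=
  fun p q => A (dupIdx i p) (dupIdx i q)

def dupVec {n : ℕ} (v : Fin n → ℝ) (i : Fin n) (t : ℝ) : Fin (n + 1) → ℝ :=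
  fun p => Fin.lastCases (v i - t) (fun j => if j = i then t else v j) p

lemma dup_sum {n : ℕ} (h v : Fin n → ℝ) (i : Fin n) (t : ℝ) :
    ∑ p, h (dupIdx i p) * dupVec v i t p = ∑ j, h j * v j := by
  rw [Fin.sum_univ_castSucc]
  simp only [dupIdx, dupVec, Fin.lastCases_castSucc, Fin.lastCases_last]
  have key : (∑ j ∈ Finset.univ \ {i}, h j * (if j = i then t else v j)) =
      ∑ j ∈ Finset.univ \ {i}, h j * v j :=
    Finset.sum_congr rfl fun j hj => by
      rw [if_neg (by simpa using (Finset.mem_sdiff.1 hj).2)]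
  rw [Finset.sum_eq_sum_sdiff_singleton_add (Finset.mem_univ i)
      (fun j => h j * (if j = i then t else v j)),
    Finset.sum_eq_sum_sdiff_singleton_add (Finset.mem_univ i) (fun j => h j * v j),
    key, if_pos rfl]
  ring

lemma dup_sumsq {n : ℕ} (v : Fin n → ℝ) (i : Fin n) (t : ℝ) :
    ∑ p, dupVec v i t p ^ 2 = (∑ j, v j ^ 2) - v i ^ 2 + t ^ 2 + (v i - t) ^ 2 := by
  rw [Fin.sum_univ_castSucc]
  simp only [dupVec, Fin.lastCases_castSucc, Fin.lastCases_last]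
  have key : (∑ j ∈ Finset.univ \ {i}, (if j = i then t else v j) ^ 2) =
      ∑ j ∈ Finset.univ \ {i}, v j ^ 2 :=
    Finset.sum_congr rfl fun j hj => by
      rw [if_neg (by simpa using (Finset.mem_sdiff.1 hj).2)]
  rw [Finset.sum_eq_sum_sdiff_singleton_add (Finset.mem_univ i)
      (fun j => (if j = i then t else v j) ^ 2),
    Finset.sum_eq_sum_sdiff_singleton_add (Finset.mem_univ i) (fun j => v j ^ 2),
    key, if_pos rfl]
  ring

lemma dupM_mem {n : ℕ} {a b : ℝ} {A : Matrix (Fin n) (Fin n) ℝ} (hA : A ∈ Snab n a b)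
    (i : Fin n) : dupM A i ∈ Snab (n + 1) a b := by
  refine ⟨?_, fun p q => hA.2 _ _⟩
  ext p q
  simp only [Matrix.conjTranspose_apply, dupM, star_trivial]
  simpa using hA.1.apply (dupIdx i p) (dupIdx i q)

lemma dup_quad {n : ℕ} (A : Matrix (Fin n) (Fin n) ℝ) (v : Fin n → ℝ) (i : Fin n) (t : ℝ) :
    dupVec v i t ⬝ᵥ dupM A i *ᵥ dupVec v i t = v ⬝ᵥ A *ᵥ v := by
  calc dupVec v i t ⬝ᵥ dupM A i *ᵥ dupVec v i t
      = ∑ p, (A *ᵥ v) (dupIdx i p) * dupVec v i t p := by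
        refine Finset.sum_congr rfl fun p _ => ?_
        have h : (dupM A i *ᵥ dupVec v i t) p = (A *ᵥ v) (dupIdx i p) := by
          show ∑ q, A (dupIdx i p) (dupIdx i q) * dupVec v i t q = _
          exact dup_sum (fun k => A (dupIdx i p) k) v i t
        rw [h]; ring
    _ = ∑ j, (A *ᵥ v) j * v j := dup_sum (A *ᵥ v) v i t
    _ = v ⬝ᵥ A *ᵥ v := by rw [← dotProduct_comm]; rfl

/-- If the spread of a matrix in `Snab n` is positive, there is a strictly better matrix in
`Snab (n+1)`, obtained by duplicating a coordinate of an extreme eigenvector. -/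
lemma exists_better {n : ℕ} {a b : ℝ} {A : Matrix (Fin n) (Fin n) ℝ} (hn : 1 ≤ n)
    (hA : A ∈ Snab n a b) (hpos : 0 < spread A) :
    ∃ B ∈ Snab (n + 1) a b, spread A < spread B := by
  have hne : Nonempty (Fin n) := ⟨⟨0, by omega⟩⟩
  rcases lt_or_ge 0 (maxEig A) with hM | hM
  · -- use a max eigenvector
    obtain ⟨v, hv1, hv2⟩ := exists_max_unit hA.1
    have hvi : ∃ i, v i ≠ 0 := by
      by_contra h
      push_neg at h
      simp only [h] at hv1
      simp at hv1
    obtain ⟨i, hi⟩ := hvi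
    refine ⟨dupM A i, dupM_mem hA i, ?_⟩
    have hB : (dupM A i).IsHermitian := (dupM_mem hA i).1
    -- strict improvement of maxEig
    have hs : ∑ p, dupVec v i (v i / 2) p ^ 2 = 1 - v i ^ 2 / 2 := by
      rw [dup_sumsq, hv1]; ring
    have hq : dupVec v i (v i / 2) ⬝ᵥ dupM A i *ᵥ dupVec v i (v i / 2) = maxEig A := by
      rw [dup_quad]; exact hv2
    have h1 := quad_le hB (dupVec v i (v i / 2))
    rw [hq, hs] at h1
    have hvipos : 0 < v i ^ 2 := by positivity
    have hvile : v i ^ 2 ≤ 1 := by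
      rw [← hv1]
      exact Finset.single_le_sum (fun j _ => sq_nonneg (v j)) (Finset.mem_univ i)
    have hmaxlt : maxEig A < maxEig (dupM A i) := by nlinarith
    -- minEig does not increase (zero extension of a min eigenvector)
    obtain ⟨w, hw1, hw2⟩ := exists_min_unit hA.1
    have hs' : ∑ p, dupVec w i (w i) p ^ 2 = 1 := by
      rw [dup_sumsq, hw1]; ring
    have hq' : dupVec w i (w i) ⬝ᵥ dupM A i *ᵥ dupVec w i (w i) = minEig A := by
      rw [dup_quad]; exact hw2
    have h2 := le_quad hB (dupVec w i (w i))
    rw [hq', hs', mul_one] at h2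
    unfold spread
    linarith
  · -- maxEig A ≤ 0, so minEig A < 0: use a min eigenvector
    have hm : minEig A < 0 := by unfold spread at hpos; linarith
    obtain ⟨v, hv1, hv2⟩ := exists_min_unit hA.1
    have hvi : ∃ i, v i ≠ 0 := by
      by_contra h
      push_neg at h
      simp only [h] at hv1
      simp at hv1
    obtain ⟨i, hi⟩ := hvi
    refine ⟨dupM A i, dupM_mem hA i, ?_⟩
    have hB : (dupM A i).IsHermitian := (dupM_mem hA i).1
    have hs : ∑ p, dupVec v i (v i / 2) p ^ 2 = 1 - v i ^ 2 / 2 := by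
      rw [dup_sumsq, hv1]; ring
    have hq : dupVec v i (v i / 2) ⬝ᵥ dupM A i *ᵥ dupVec v i (v i / 2) = minEig A := by
      rw [dup_quad]; exact hv2
    have h1 := le_quad hB (dupVec v i (v i / 2))
    rw [hq, hs] at h1
    have hvipos : 0 < v i ^ 2 := by positivity
    have hvile : v i ^ 2 ≤ 1 := by
      rw [← hv1]
      exact Finset.single_le_sum (fun j _ => sq_nonneg (v j)) (Finset.mem_univ i)
    have hminlt : minEig (dupM A i) < minEig A := by nlinarith
    obtain ⟨w, hw1, hw2⟩ := exists_max_unit hA.1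
    have hs' : ∑ p, dupVec w i (w i) p ^ 2 = 1 := by
      rw [dup_sumsq, hw1]; ring
    have hq' : dupVec w i (w i) ⬝ᵥ dupM A i *ᵥ dupVec w i (w i) = maxEig A := by
      rw [dup_quad]; exact hw2
    have h2 := quad_le hB (dupVec w i (w i))
    rw [hq', hs', mul_one] at h2
    unfold spread
    linarith

end Dup

section Degenerate

/-- In dimension at least 2 there is a matrix in `Snab` with spread at least `2 * max |a| |b|`,
in particular a positive spread when `a < b`. -/
lemma exists_posSpread {n : ℕ} {a b : ℝ} (hab : a < b) (hn : 1 ≤ n) :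
    ∃ B ∈ Snab (n + 1) a b, 0 < spread B := by
  obtain ⟨k, rfl⟩ : ∃ k, n = k + 1 := ⟨n - 1, by omega⟩
  have h01 : (0 : Fin (k + 2)) ≠ 1 := by
    intro h
    have := congrArg Fin.val h
    simp at this
  -- pick the off-diagonal entry d of largest absolute value, diagonal entry c
  obtain ⟨c, d, hc, hd, hdne⟩ : ∃ c d : ℝ, c ∈ Set.Icc a b ∧ d ∈ Set.Icc a b ∧ d ≠ 0 := by
    rcases lt_or_ge 0 b with h | h
    · exact ⟨a, b, ⟨le_refl a, hab.le⟩, ⟨hab.le, le_refl b⟩, by linarith⟩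
    · exact ⟨b, a, ⟨hab.le, le_refl b⟩, ⟨le_refl a, hab.le⟩, by linarith⟩
  set B : Matrix (Fin (k + 2)) (Fin (k + 2)) ℝ := fun p q => if p = q then c else d with hBdef
  have hBmem : B ∈ Snab (k + 2) a b := by
    constructor
    · ext p q
      rw [Matrix.conjTranspose_apply, star_trivial]
      simp only [hBdef]
      by_cases h : p = q
      · subst h; simp
      · rw [if_neg h, if_neg (Ne.symm h)]
    · intro i j
      by_cases h : i = j <;> simp [hBdef, h, hc, hd]
  have hB : B.IsHermitian := hBmem.1
  -- test vectors supported on coordinates 0 and 1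
  set s : ℝ := Real.sqrt (1 / 2) with hsdef
  have hs2 : s ^ 2 = 1 / 2 := Real.sq_sqrt (by norm_num)
  set x : Fin (k + 2) → ℝ := fun p => if p = 0 then s else if p = 1 then s else 0 with hxdef
  set y : Fin (k + 2) → ℝ := fun p => if p = 0 then s else if p = 1 then -s else 0 with hydef
  have hsupp : ∀ (z : Fin (k + 2) → ℝ),
      (∀ p, p ≠ 0 → p ≠ 1 → z p = 0) → ∑ p, z p = z 0 + z 1 := by
    intro z hz
    rw [← Finset.sum_pair h01]
    symm
    apply Finset.sum_subset (Finset.subset_univ _)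
    intro p _ hp
    simp only [Finset.mem_insert, Finset.mem_singleton, not_or] at hp
    exact hz p hp.1 hp.2
  have hxunit : ∑ p, x p ^ 2 = 1 := by
    rw [hsupp (fun p => x p ^ 2) (fun p h0 h1 => by simp [hxdef, h0, h1])]
    simp only [hxdef, if_pos rfl, if_neg h01.symm, eq_self_iff_true, if_true]
    nlinarith
  have hyunit : ∑ p, y p ^ 2 = 1 := by
    rw [hsupp (fun p => y p ^ 2) (fun p h0 h1 => by simp [hydef, h0, h1])]
    simp only [hydef, if_pos rfl, if_neg h01.symm, eq_self_iff_true, if_true]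
    nlinarith
  have hmul : ∀ z : Fin (k + 2) → ℝ, (∀ p, p ≠ 0 → p ≠ 1 → z p = 0) →
      z ⬝ᵥ B *ᵥ z = z 0 * (B 0 0 * z 0 + B 0 1 * z 1) + z 1 * (B 1 0 * z 0 + B 1 1 * z 1) := by
    intro z hz
    have hrow : ∀ p, (B *ᵥ z) p = B p 0 * z 0 + B p 1 * z 1 := by
      intro p
      show ∑ q, B p q * z q = _
      rw [hsupp (fun q => B p q * z q) (fun q h0 h1 => by simp [hz q h0 h1])]
    have h2 := hsupp (fun p => z p * (B *ᵥ z) p) (fun p h0 h1 => by simp [hz p h0 h1])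
    show ∑ p, z p * (B *ᵥ z) p = _
    rw [h2, hrow 0, hrow 1]
  have hBvals : B 0 0 = c ∧ B 0 1 = d ∧ B 1 0 = d ∧ B 1 1 = c := by
    refine ⟨by simp [hBdef], by simp [hBdef, h01], by simp [hBdef, h01.symm], by simp [hBdef]⟩
  have hQx : x ⬝ᵥ B *ᵥ x = c + d := by
    rw [hmul x (fun p h0 h1 => by simp [hxdef, h0, h1])]
    simp only [hxdef, if_pos rfl, if_neg h01.symm, eq_self_iff_true, if_true,
      hBvals.1, hBvals.2.1, hBvals.2.2.1, hBvals.2.2.2]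
    linear_combination (2 * c + 2 * d) * hs2
  have hQy : y ⬝ᵥ B *ᵥ y = c - d := by
    rw [hmul y (fun p h0 h1 => by simp [hydef, h0, h1])]
    simp only [hydef, if_pos rfl, if_neg h01.symm, eq_self_iff_true, if_true,
      hBvals.1, hBvals.2.1, hBvals.2.2.1, hBvals.2.2.2]
    linear_combination (2 * c - 2 * d) * hs2
  have hge1 : x ⬝ᵥ B *ᵥ x - y ⬝ᵥ B *ᵥ y ≤ spread B := spread_ge hB hxunit hyunit
  have hge2 : y ⬝ᵥ B *ᵥ y - x ⬝ᵥ B *ᵥ x ≤ spread B := spread_ge hB hyunit hxunit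
  rw [hQx, hQy] at hge1 hge2
  refine ⟨B, hBmem, ?_⟩
  rcases lt_or_ge 0 d with h | h
  · linarith
  · have : d < 0 := lt_of_le_of_ne h hdne
    linarith

end Degenerate

/-- the maximal spread on S_n[a,b] strictly increases with n. -/
theorem max_spread_strict_mono {a b : ℝ} (hab : a < b) (n : ℕ) (hn : 1 ≤ n) :
    ∃ M M' : ℝ, IsGreatest (spread '' Snab n a b) M ∧
      IsGreatest (spread '' Snab (n + 1) a b) M' ∧ M < M' := by
  obtain ⟨A₀, hA₀, hG⟩ := exists_greatest n hn hab.le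
  obtain ⟨A₁, hA₁, hG'⟩ := exists_greatest (n + 1) (by omega) hab.le
  refine ⟨spread A₀, spread A₁, hG, hG', ?_⟩
  rcases lt_or_ge 0 (spread A₀) with h | h
  · obtain ⟨B, hB, hlt⟩ := exists_better hn hA₀ h
    exact lt_of_lt_of_le hlt (hG'.2 ⟨B, hB, rfl⟩)
  · obtain ⟨B, hB, hpos⟩ := exists_posSpread hab hn
    have := hG'.2 ⟨B, hB, rfl⟩
    linarith
end

section
/- For every n×n real symmetric matrix A, the spread satisfies Mirsky's bound: s(A) ≤ sqrt(2‖A‖_F² − tr(A)²/n), where ‖A‖_F is the Frobenius norm. -/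
open Matrix

lemma trace_eq_sum_eig {n : ℕ} (A : Matrix (Fin n) (Fin n) ℝ) (hA : A.IsHermitian) :
    A.trace = ∑ i, hA.eigenvalues i := by
  set U : Matrix (Fin n) (Fin n) ℝ := ↑(hA.eigenvectorUnitary) with hUdef
  have hU2 : U * star U = 1 := Unitary.coe_mul_star_self _
  have h : star U * A * U = diagonal (RCLike.ofReal ∘ hA.eigenvalues) := by
    rw [← hA.conjStarAlgAut_star_eigenvectorUnitary, Unitary.conjStarAlgAut_apply]
    simp [Unitary.coe_star, hUdef]
  have : A.trace = (star U * A * U).trace := by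
    rw [trace_mul_comm, ← mul_assoc, hU2, one_mul]
  rw [this, h, trace_diagonal]
  rfl

lemma frob_eq_sum_eig_sq {n : ℕ} (A : Matrix (Fin n) (Fin n) ℝ) (hA : A.IsHermitian) :
    ∑ i, ∑ j, (A i j) ^ 2 = ∑ i, hA.eigenvalues i ^ 2 := by
  set U : Matrix (Fin n) (Fin n) ℝ := ↑(hA.eigenvectorUnitary) with hUdef
  have hU2 : U * star U = 1 := Unitary.coe_mul_star_self _
  have hU2' : ∀ X : Matrix (Fin n) (Fin n) ℝ, U * (star U * X) = X := fun X => by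
    rw [← mul_assoc, hU2, one_mul]
  set D : Matrix (Fin n) (Fin n) ℝ := diagonal (RCLike.ofReal ∘ hA.eigenvalues) with hDdef
  have h : star U * A * U = D := by
    rw [hDdef, ← hA.conjStarAlgAut_star_eigenvectorUnitary, Unitary.conjStarAlgAut_apply]
    simp [Unitary.coe_star, hUdef]
  have h2 : D * D = star U * (A * A) * U := by
    rw [← h]; simp only [Matrix.mul_assoc, hU2']
  have h3 : (A * A).trace = (D * D).trace := by
    conv_rhs => rw [h2, trace_mul_comm, hU2']
  have h4 : (D * D).trace = ∑ i, hA.eigenvalues i ^ 2 := by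
    rw [hDdef, diagonal_mul_diagonal, trace_diagonal]
    apply Finset.sum_congr rfl
    intro i _
    simp [sq]
  have h5 : (A * A).trace = ∑ i, ∑ j, (A i j) ^ 2 := by
    simp only [Matrix.trace, Matrix.diag, Matrix.mul_apply]
    apply Finset.sum_congr rfl
    intro i _
    apply Finset.sum_congr rfl
    intro j _
    have := hA.apply i j
    simp only [star_trivial] at this
    rw [this, sq]
  rw [← h5, h3, h4]

/-- Mirsky's bound: s(A) ≤ sqrt(2‖A‖_F² − tr(A)²/n). -/
theorem spread_le_mirsky {n : ℕ} (A : Matrix (Fin n) (Fin n) ℝ) (hA : A.IsHermitian) :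
    spread A ≤ Real.sqrt (2 * ∑ i, ∑ j, (A i j) ^ 2 - (A.trace) ^ 2 / n) := by
  rcases Nat.eq_zero_or_pos n with hn | hn
  · subst hn
    have h1 : spread A = 0 := by
      rw [spread, maxEig, minEig, dif_pos hA, dif_pos hA, Real.iSup_of_isEmpty, Real.iInf_of_isEmpty,
        sub_self]
    rw [h1]
    exact Real.sqrt_nonneg _
  · haveI : Nonempty (Fin n) := Fin.pos_iff_nonempty.mp hn
    set lam := hA.eigenvalues with hlam
    obtain ⟨p, hp⟩ := exists_eq_ciSup_of_finite (f := lam)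
    obtain ⟨q, hq⟩ := exists_eq_ciInf_of_finite (f := lam)
    have hsp : spread A = lam p - lam q := by
      rw [spread, maxEig, minEig, dif_pos hA, dif_pos hA, ← hp, ← hq]
    apply Real.le_sqrt_of_sq_le
    rw [hsp, trace_eq_sum_eig A hA]
    have hQ : ∑ i, ∑ j, (A i j) ^ 2 = ∑ i, lam i ^ 2 := frob_eq_sum_eig_sq A hA
    rw [hQ]
    set S : ℝ := ∑ i, lam i with hS
    set Q : ℝ := ∑ i, lam i ^ 2 with hQ2
    set μ : ℝ := S / n with hmu
    have hnR : (0:ℝ) < n := by exact_mod_cast hn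
    -- p ≠ q or lam p = lam q
    have hpq : lam q ≤ lam p := by
      calc lam q = ⨅ i, lam i := hq
        _ ≤ lam p := ciInf_le (Set.Finite.bddBelow (Set.finite_range _)) p
    have hsum : ∑ i, (lam i - μ) ^ 2 = Q - S ^ 2 / n := by
      have : ∑ i, (lam i - μ) ^ 2 = ∑ i, (lam i ^ 2 - 2 * μ * lam i + μ ^ 2) := by
        apply Finset.sum_congr rfl; intro i _; ring
      rw [this, Finset.sum_add_distrib, Finset.sum_sub_distrib, ← Finset.mul_sum,
        Finset.sum_const, Finset.card_univ, Fintype.card_fin, nsmul_eq_mul]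
      rw [hmu]
      field_simp
      ring
    have hkey : (lam p - μ) ^ 2 + (lam q - μ) ^ 2 ≤ ∑ i, (lam i - μ) ^ 2 := by
      rcases eq_or_ne p q with h | h
      · subst h
        have : lam p - μ = 0 := by
          have h1 : ∀ i, lam i ≤ lam p := fun i => hp ▸ le_ciSup (Set.Finite.bddAbove (Set.finite_range _)) i
        -- lam p = min and max implies all eigenvalues equal lam p
          have h2 : ∀ i, lam p ≤ lam i := fun i => hq ▸ ciInf_le (Set.Finite.bddBelow (Set.finite_range _)) i
          have hall : ∀ i, lam i = lam p := fun i => le_antisymm (h1 i) (h2 i)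
          have : S = n * lam p := by
            rw [hS]
            rw [Finset.sum_congr rfl (fun i _ => hall i), Finset.sum_const, Finset.card_univ,
              Fintype.card_fin, nsmul_eq_mul]
          rw [hmu, this]
          field_simp
          ring
        rw [this]
        norm_num
        positivity
      · have hsub : ({p, q} : Finset (Fin n)) ⊆ Finset.univ := Finset.subset_univ _
        calc (lam p - μ) ^ 2 + (lam q - μ) ^ 2 = ∑ i ∈ ({p, q} : Finset (Fin n)), (lam i - μ) ^ 2 := by
              rw [Finset.sum_pair h]
          _ ≤ ∑ i, (lam i - μ) ^ 2 :=
              Finset.sum_le_sum_of_subset_of_nonneg hsub (fun i _ _ => sq_nonneg _)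
    have hS2 : 0 ≤ S ^ 2 / n := by positivity
    nlinarith [sq_nonneg (lam p + lam q - 2 * μ), hsum, hkey]
end
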